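/- arXiv:1111.0071 — 8 statements merged into one kernel-verified Lean document; each statement's English description precedes it below -/
import Mathlib

section
/- Let B > 0 and let p¹, p² ∈ ℝ². For every T > 0 and every continuously differentiable curve γ : [0,T] → ℝ² with γ(0) = p¹ and γ(T) = p², the control energy satisfies ∫₀^T ‖γ'(t) − (B,0)‖² dt ≥ 2B(d_{p¹p²} + x_{p¹} − x_{p²}). -/
open scoped RealInnerProductSpace

noncomputable abbrev Pt := EuclideanSpace ℝ (Fin 2)

/-- The constant flow field with velocity `(B, 0)`. -/
noncomputable def flow (B : ℝ) : Pt := WithLp.toLp 2 (fun i => if i = 0 then B else 0 : Fin 2 → ℝ)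

/-- for every `T > 0` and every continuously differentiable curve
`γ : [0,T] → ℝ²` with `γ 0 = p¹` and `γ T = p²`, the control energy
`∫₀ᵀ ‖γ'(t) - (B,0)‖² dt` is at least `2B(d_{p¹p²} + x_{p¹} - x_{p²})`. -/
theorem energy_lower_bound
    (B : ℝ) (hB : 0 < B) (p1 p2 : Pt) (T : ℝ) (hT : 0 < T)
    (γ : ℝ → Pt) (hγ : ContDiffOn ℝ 1 γ (Set.Icc 0 T))
    (h0 : γ 0 = p1) (hTf : γ T = p2) :
    2 * B * (dist p1 p2 + p1 0 - p2 0) ≤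
      ∫ t in (0 : ℝ)..T, ‖derivWithin γ (Set.Icc 0 T) t - flow B‖ ^ 2 := by
  have hTle : (0:ℝ) ≤ T := hT.le
  set s : Set ℝ := Set.Icc 0 T with hs
  have huIcc : Set.uIcc (0:ℝ) T = s := Set.uIcc_of_le hTle
  have hud : UniqueDiffOn ℝ s := uniqueDiffOn_Icc hT
  set g : ℝ → Pt := derivWithin γ s with hgdef
  have hgc : ContinuousOn g s := hγ.continuousOn_derivWithin hud le_rfl
  -- integrand continuity
  have hucont : ContinuousOn (fun t => g t - flow B) s := hgc.sub continuousOn_const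
  have huint : IntervalIntegrable (fun t => g t - flow B) MeasureTheory.volume 0 T :=
    (huIcc ▸ hucont).intervalIntegrable
  -- FTC : ∫ g = p2 - p1
  have hFTC : (∫ t in (0:ℝ)..T, g t) = p2 - p1 := by
    have hder : ∀ x ∈ Set.Ioo (0:ℝ) T, HasDerivWithinAt γ (g x) (Set.Ioi x) x := by
      intro x hx
      have h1 : HasDerivWithinAt γ (g x) s x :=
        ((hγ.differentiableOn one_ne_zero) x (Set.Ioo_subset_Icc_self hx)).hasDerivWithinAt
      exact h1.mono_of_mem_nhdsWithin (Icc_mem_nhdsGT_of_mem ⟨hx.1.le, hx.2⟩)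
    have := intervalIntegral.integral_eq_sub_of_hasDeriv_right_of_le hTle
      hγ.continuousOn hder (huIcc ▸ hgc).intervalIntegrable
    rw [this, h0, hTf]
  have hgint : (∫ t in (0:ℝ)..T, (g t - flow B)) = (p2 - p1) - T • flow B := by
    rw [intervalIntegral.integral_sub ((huIcc ▸ hgc).intervalIntegrable)
      intervalIntegrable_const, hFTC, intervalIntegral.integral_const, sub_zero]
  -- main inequality for any fixed vector w
  have key : ∀ w : Pt,
      2 * ⟪w, (p2 - p1) - T • flow B⟫ - T * ‖w‖ ^ 2 ≤
        ∫ t in (0:ℝ)..T, ‖g t - flow B‖ ^ 2 := by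
    intro w
    have hpt : ∀ t ∈ s, 2 * ⟪w, g t - flow B⟫ - ‖w‖ ^ 2 ≤ ‖g t - flow B‖ ^ 2 := by
      intro t _
      have h0' : (0:ℝ) ≤ ‖(g t - flow B) - w‖ ^ 2 := sq_nonneg _
      rw [norm_sub_sq_real] at h0'
      rw [real_inner_comm]
      linarith
    have hint1 : IntervalIntegrable (fun t => 2 * ⟪w, g t - flow B⟫ - ‖w‖ ^ 2)
        MeasureTheory.volume 0 T := by
      apply ContinuousOn.intervalIntegrable
      rw [huIcc]
      exact ((continuousOn_const.mul ((continuous_inner.comp_continuousOn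
        (continuousOn_const.prodMk hucont)))).sub continuousOn_const)
    have hint2 : IntervalIntegrable (fun t => ‖g t - flow B‖ ^ 2)
        MeasureTheory.volume 0 T := by
      apply ContinuousOn.intervalIntegrable
      rw [huIcc]
      exact (hucont.norm.pow 2)
    have hmono := intervalIntegral.integral_mono_on hTle hint1 hint2
      (fun t ht => hpt t ht)
    have hIntOn : MeasureTheory.IntegrableOn (fun t => g t - flow B)
        (Set.Ioc 0 T) MeasureTheory.volume := by
      have h1 := huint
      rw [intervalIntegrable_iff_integrableOn_Ioc_of_le hTle] at h1
      exact h1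
    have hIinner : (∫ t in (0:ℝ)..T, ⟪w, g t - flow B⟫) =
        ⟪w, (p2 - p1) - T • flow B⟫ := by
      rw [← hgint, intervalIntegral.integral_of_le hTle,
        intervalIntegral.integral_of_le hTle]
      exact integral_inner hIntOn w
    have hcalc : (∫ t in (0:ℝ)..T, (2 * ⟪w, g t - flow B⟫ - ‖w‖ ^ 2)) =
        2 * ⟪w, (p2 - p1) - T • flow B⟫ - T * ‖w‖ ^ 2 := by
      rw [intervalIntegral.integral_sub
        (by
          have := hIinner
          apply IntervalIntegrable.const_mul
          apply ContinuousOn.intervalIntegrable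
          rw [huIcc]
          exact continuous_inner.comp_continuousOn (continuousOn_const.prodMk hucont))
        intervalIntegrable_const,
        intervalIntegral.integral_const_mul, hIinner, intervalIntegral.integral_const,
        smul_eq_mul, sub_zero]
    rw [← hcalc]
    exact hmono
  -- now choose w
  by_cases hd : dist p1 p2 = 0
  · -- p1 = p2
    have hp : p1 = p2 := by rwa [dist_eq_zero] at hd
    have := key 0
    simp only [inner_zero_left, norm_zero] at this
    rw [hd, hp]
    calc 2 * B * (0 + p2 0 - p2 0) = 2 * 0 - T * 0 ^ 2 := by ring
    _ ≤ _ := by simpa using this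
  · set d : ℝ := dist p1 p2 with hddef
    have hdpos : 0 < d := lt_of_le_of_ne dist_nonneg (Ne.symm hd)
    set w : Pt := (B / d) • (p2 - p1) - flow B with hwdef
    have hΔ : ‖p2 - p1‖ = d := by rw [hddef, dist_eq_norm, norm_sub_rev]
    have hΔΔ : ⟪p2 - p1, p2 - p1⟫ = d ^ 2 := by
      rw [real_inner_self_eq_norm_sq, hΔ]
    have hFF : ⟪(flow B : Pt), (flow B : Pt)⟫ = B ^ 2 := by
      rw [PiLp.inner_apply]
      simp [flow, Fin.sum_univ_two, sq]
    have hΔF : ⟪p2 - p1, (flow B : Pt)⟫ = B * (p2 0 - p1 0) := by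
      simp only [PiLp.inner_apply, Fin.sum_univ_two, flow]
      simp [PiLp.sub_apply, mul_comm]
    have hFΔ : ⟪(flow B : Pt), p2 - p1⟫ = B * (p2 0 - p1 0) := by
      rw [real_inner_comm]; exact hΔF
    have hwnorm : ‖w‖ ^ 2 = 2 * B ^ 2 - 2 * (B / d) * (B * (p2 0 - p1 0)) := by
      rw [hwdef, norm_sub_sq_real, real_inner_smul_left, hΔF, norm_smul, ← real_inner_self_eq_norm_sq, hFF]
      rw [Real.norm_eq_abs, abs_of_pos (div_pos hB hdpos), hΔ]
      rw [mul_pow, div_pow]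
      field_simp
      ring
    have hwΔ : ⟪w, p2 - p1⟫ = B * d - B * (p2 0 - p1 0) := by
      rw [hwdef]
      simp only [inner_sub_left, real_inner_smul_left, hΔΔ, hFΔ]
      field_simp
    have hwF : ⟪w, (flow B : Pt)⟫ = (B / d) * (B * (p2 0 - p1 0)) - B ^ 2 := by
      rw [hwdef]
      simp only [inner_sub_left, real_inner_smul_left, hΔF, hFF]
    have := key w
    have hinner : ⟪w, (p2 - p1) - T • flow B⟫ =
        (B * d - B * (p2 0 - p1 0)) - T * ((B / d) * (B * (p2 0 - p1 0)) - B ^ 2) := by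
      rw [inner_sub_right, real_inner_smul_right, hwΔ, hwF]
    rw [hinner, hwnorm] at this
    calc 2 * B * (d + p1 0 - p2 0)
        = 2 * ((B * d - B * (p2 0 - p1 0)) - T * ((B / d) * (B * (p2 0 - p1 0)) - B ^ 2))
          - T * (2 * B ^ 2 - 2 * (B / d) * (B * (p2 0 - p1 0))) := by ring
    _ ≤ _ := this
end

section
/- Let p¹, p² ∈ ℝ² satisfy x_{p¹} < x_{p²} and y_{p¹} < y_{p²}. With a = (x_{p²} − x_{p¹})/2, b = (y_{p²} − y_{p¹})/2, and the transformed coordinates x'_p, y'_p defined from p¹, p², a point p ∈ ℝ² satisfies d_{p¹p} − d_{p²p} = x_{p²} − x_{p¹} if and only if (x'_p)²/a² − (y'_p)²/b² = 1 and x'_p ≥ a. That is, the energy-based Voronoi boundary between p¹ and p² is the branch of a hyperbola with foci p¹, p² in the rotated/translated frame. -/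
lemma hyperbola_key (a b c x y : ℝ) (ha : 0 < a) (hb : 0 < b) (hc : 0 < c)
    (habc : c ^ 2 = a ^ 2 + b ^ 2) :
    Real.sqrt ((x + c) ^ 2 + y ^ 2) - Real.sqrt ((x - c) ^ 2 + y ^ 2) = 2 * a ↔
      (x ^ 2 / a ^ 2 - y ^ 2 / b ^ 2 = 1 ∧ a ≤ x) := by
  have hac : a < c := by nlinarith
  have h1nn : (0:ℝ) ≤ (x + c) ^ 2 + y ^ 2 := by positivity
  have h2nn : (0:ℝ) ≤ (x - c) ^ 2 + y ^ 2 := by positivity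
  set d1 := Real.sqrt ((x + c) ^ 2 + y ^ 2) with hd1
  set d2 := Real.sqrt ((x - c) ^ 2 + y ^ 2) with hd2
  have hd1sq : d1 ^ 2 = (x + c) ^ 2 + y ^ 2 := Real.sq_sqrt h1nn
  have hd2sq : d2 ^ 2 = (x - c) ^ 2 + y ^ 2 := Real.sq_sqrt h2nn
  have hd1nn : 0 ≤ d1 := Real.sqrt_nonneg _
  have hd2nn : 0 ≤ d2 := Real.sqrt_nonneg _
  have ha' : a ≠ 0 := ne_of_gt ha
  have hb' : b ≠ 0 := ne_of_gt hb
  constructor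
  · intro h
    have hdd : d1 = d2 + 2 * a := by linarith
    have hsum : a * d2 = c * x - a ^ 2 := by
      have e : (d2 + 2*a) ^ 2 = (x + c) ^ 2 + y ^ 2 := by rw [← hdd]; exact hd1sq
      nlinarith [hd2sq]
    have hxpos : a ^ 2 ≤ c * x := by nlinarith
    have hx0 : 0 < x := by nlinarith
    have e2' : a ^ 2 * ((x - c) ^ 2 + y ^ 2) = (c * x - a ^ 2) ^ 2 := by
      rw [← hd2sq]
      rw [← hsum]; ring
    have hpoly : b ^ 2 * x ^ 2 = a ^ 2 * b ^ 2 + a ^ 2 * y ^ 2 := by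
      linear_combination (-1) * e2' + (a ^ 2 - x ^ 2) * habc
    have hhyp : x ^ 2 / a ^ 2 - y ^ 2 / b ^ 2 = 1 := by
      field_simp
      linear_combination hpoly
    refine ⟨hhyp, ?_⟩
    by_contra hlt
    push_neg at hlt
    have hx2 : a ^ 2 ≤ x ^ 2 := by
      nlinarith [hpoly, mul_nonneg (sq_nonneg a) (sq_nonneg y), mul_pos hb hb]
    nlinarith [mul_pos (sub_pos.mpr hlt) hx0, mul_pos (sub_pos.mpr hlt) ha, hx2]
  · rintro ⟨h1, h2⟩
    have hpoly : a ^ 2 * y ^ 2 = b ^ 2 * x ^ 2 - a ^ 2 * b ^ 2 := by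
      field_simp at h1
      linear_combination (-1) * h1
    have hcx : a ≤ c * x / a := by
      rw [le_div_iff₀ ha]
      exact mul_le_mul hac.le h2 ha.le hc.le
    have e1 : (x + c) ^ 2 + y ^ 2 = (c * x / a + a) ^ 2 := by
      field_simp
      linear_combination hpoly + (a ^ 2 - x ^ 2) * habc
    have e2 : (x - c) ^ 2 + y ^ 2 = (c * x / a - a) ^ 2 := by
      field_simp
      linear_combination hpoly + (a ^ 2 - x ^ 2) * habc
    have hv1 : d1 = c * x / a + a := by
      rw [hd1, e1, Real.sqrt_sq (by linarith)]
    have hv2 : d2 = c * x / a - a := by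
      rw [hd2, e2, Real.sqrt_sq (by linarith)]
    rw [hv1, hv2]; ring

lemma dist_pt (x y : EuclideanSpace ℝ (Fin 2)) :
    dist x y = Real.sqrt ((x 0 - y 0) ^ 2 + (x 1 - y 1) ^ 2) := by
  rw [EuclideanSpace.dist_eq, Fin.sum_univ_two]
  simp [Real.dist_eq, sq_abs]

lemma rot_plus (u v a b c : ℝ) (hc : c ≠ 0) (h : c ^ 2 = a ^ 2 + b ^ 2) :
    ((u * a + v * b) / c + c) ^ 2 + ((-(u * b) + v * a) / c) ^ 2
      = (u + a) ^ 2 + (v + b) ^ 2 := by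
  field_simp
  linear_combination (c ^ 2 - u ^ 2 - v ^ 2) * h

lemma rot_minus (u v a b c : ℝ) (hc : c ≠ 0) (h : c ^ 2 = a ^ 2 + b ^ 2) :
    ((u * a + v * b) / c - c) ^ 2 + ((-(u * b) + v * a) / c) ^ 2
      = (u - a) ^ 2 + (v - b) ^ 2 := by
  field_simp
  linear_combination (c ^ 2 - u ^ 2 - v ^ 2) * h



/-- with `x_{p¹} < x_{p²}` and `y_{p¹} < y_{p²}`, a point `p` satisfies
`d_{p¹p} - d_{p²p} = x_{p²} - x_{p¹}` iff, in the rotated/translated coordinates,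
`(x'_p)²/a² - (y'_p)²/b² = 1` with `x'_p ≥ a`: the energy-based Voronoi boundary is a
hyperbola branch with foci `p¹, p²`. -/
theorem boundary_is_hyperbola_branch
    (p1 p2 p : Pt) (hx : p1 0 < p2 0) (hy : p1 1 < p2 1) :
    let a : ℝ := (p2 0 - p1 0) / 2
    let b : ℝ := (p2 1 - p1 1) / 2
    let cosα : ℝ := (p2 0 - p1 0) / dist p1 p2
    let sinα : ℝ := (p2 1 - p1 1) / dist p1 p2
    let x' : ℝ := (p 0 - (p1 0 + p2 0) / 2) * cosα + (p 1 - (p1 1 + p2 1) / 2) * sinα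
    let y' : ℝ := -(p 0 - (p1 0 + p2 0) / 2) * sinα + (p 1 - (p1 1 + p2 1) / 2) * cosα
    (dist p1 p - dist p2 p = p2 0 - p1 0) ↔
      (x' ^ 2 / a ^ 2 - y' ^ 2 / b ^ 2 = 1 ∧ a ≤ x') := by
  intro a b cosα sinα x' y'
  have ha : 0 < a := by simp only [a]; linarith
  have hb : 0 < b := by simp only [b]; linarith
  set D := dist p1 p2 with hDdef
  have hD : D = Real.sqrt ((p1 0 - p2 0) ^ 2 + (p1 1 - p2 1) ^ 2) := dist_pt p1 p2
  have hDnn : 0 ≤ D := dist_nonneg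
  have hD2 : D ^ 2 = (2 * a) ^ 2 + (2 * b) ^ 2 := by
    rw [hD, Real.sq_sqrt (by positivity)]
    simp only [a, b]; ring
  have hDpos : 0 < D := by nlinarith [mul_pos ha hb]
  set c : ℝ := D / 2 with hcdef
  have hc : 0 < c := by positivity
  have hc' : c ≠ 0 := ne_of_gt hc
  have hc2 : c ^ 2 = a ^ 2 + b ^ 2 := by
    simp only [hcdef]; nlinarith [hD2]
  set u : ℝ := p 0 - (p1 0 + p2 0) / 2 with hu
  set v : ℝ := p 1 - (p1 1 + p2 1) / 2 with hv
  have hDc : D = 2 * c := by rw [hcdef]; ring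
  have hx'eq : x' = (u * a + v * b) / c := by
    simp only [x', cosα, sinα, ← hDdef, hDc, ← hu, ← hv]
    field_simp
    simp only [a, b]; ring
  have hy'eq : y' = (-(u * b) + v * a) / c := by
    simp only [y', cosα, sinα, ← hDdef, hDc, ← hu, ← hv]
    field_simp
    simp only [a, b]; ring
  have hp1 : dist p1 p = Real.sqrt ((x' + c) ^ 2 + y' ^ 2) := by
    rw [dist_pt]
    congr 1
    rw [hx'eq, hy'eq]
    have e1 : p1 0 - p 0 = -(u + a) := by simp only [hu, a]; ring
    have e2 : p1 1 - p 1 = -(v + b) := by simp only [hv, b]; ring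
    rw [e1, e2]
    linear_combination (rot_plus u v a b c hc' hc2).symm
  have hp2 : dist p2 p = Real.sqrt ((x' - c) ^ 2 + y' ^ 2) := by
    rw [dist_pt]
    congr 1
    rw [hx'eq, hy'eq]
    have e1 : p2 0 - p 0 = -(u - a) := by simp only [hu, a]; ring
    have e2 : p2 1 - p 1 = -(v - b) := by simp only [hv, b]; ring
    rw [e1, e2]
    linear_combination (rot_minus u v a b c hc' hc2).symm
  have hrhs : p2 0 - p1 0 = 2 * a := by simp only [a]; ring
  rw [hp1, hp2, hrhs]
  exact hyperbola_key a b c x' y' ha hb hc hc2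
end

section
/- Let p¹, p² ∈ ℝ² satisfy x_{p¹} < x_{p²} and y_{p¹} = y_{p²}. Then {p ∈ ℝ² : d_{p¹p} + x_{p¹} = d_{p²p} + x_{p²}} = {p ∈ ℝ² : y_p = y_{p²} and x_p ≥ x_{p²}}; that is, the energy-based Voronoi boundary between p¹ and p² is the half line starting at p² in the positive x direction. -/
/-- if `x_{p¹} < x_{p²}` and `y_{p¹} = y_{p²}`, the energy-based Voronoi
boundary between `p¹` and `p²` is the half line starting at `p²` in the positive `x`
direction. -/
theorem horizontal_generators_halfline
    (p1 p2 : Pt) (hx : p1 0 < p2 0) (hy : p1 1 = p2 1) :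
    {p : Pt | dist p1 p + p1 0 = dist p2 p + p2 0} =
      {p : Pt | p 1 = p2 1 ∧ p2 0 ≤ p 0} := by
  ext p
  simp only [Set.mem_setOf_eq]
  have h1 : dist p1 p = Real.sqrt ((p1 0 - p 0) ^ 2 + (p1 1 - p 1) ^ 2) := by
    rw [EuclideanSpace.dist_eq, Fin.sum_univ_two]; simp [Real.dist_eq, sq_abs]
  have h2 : dist p2 p = Real.sqrt ((p2 0 - p 0) ^ 2 + (p2 1 - p 1) ^ 2) := by
    rw [EuclideanSpace.dist_eq, Fin.sum_univ_two]; simp [Real.dist_eq, sq_abs]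
  have hd1 : dist p1 p ^ 2 = (p1 0 - p 0) ^ 2 + (p1 1 - p 1) ^ 2 := by
    rw [h1, Real.sq_sqrt (by positivity)]
  have hd2 : dist p2 p ^ 2 = (p2 0 - p 0) ^ 2 + (p2 1 - p 1) ^ 2 := by
    rw [h2, Real.sq_sqrt (by positivity)]
  constructor
  · intro h
    have key : dist p1 p = dist p2 p + (p2 0 - p1 0) := by linarith
    have hd2' : dist p2 p = p 0 - p2 0 := by
      have := hd1
      rw [key, hy] at this
      have hc : (0:ℝ) < p2 0 - p1 0 := by linarith
      nlinarith [this, hd2]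
    have hx2 : p2 0 ≤ p 0 := by nlinarith [dist_nonneg (x := p2) (y := p)]
    have hy2 : (p2 1 - p 1) ^ 2 = 0 := by nlinarith [hd2, hd2']
    have : p2 1 - p 1 = 0 := by
      exact pow_eq_zero_iff (n := 2) (by norm_num) |>.mp hy2
    exact ⟨by linarith, hx2⟩
  · rintro ⟨hyp, hxp⟩
    have e2 : dist p2 p = p 0 - p2 0 := by
      rw [h2, hyp, sub_self]
      rw [show (p2 0 - p 0) ^ 2 + (0:ℝ) ^ 2 = (p 0 - p2 0) ^ 2 by ring]
      exact Real.sqrt_sq (by linarith)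
    have e1 : dist p1 p = p 0 - p1 0 := by
      rw [h1, hy, hyp, sub_self]
      rw [show (p1 0 - p 0) ^ 2 + (0:ℝ) ^ 2 = (p 0 - p1 0) ^ 2 by ring]
      exact Real.sqrt_sq (by linarith)
    rw [e1, e2]; ring
end

section
/- Let p¹ ≠ p² be points of ℝ², a = (x_{p²} − x_{p¹})/2, c = d_{p¹p²}/2, and p* = p¹ + ((c+a)/(2c))(p² − p¹). Then: (i) d_{p¹p*} = c + a and d_{p²p*} = c − a; (ii) p* lies on the energy-based Voronoi boundary, i.e., d_{p¹p*} + x_{p¹} = d_{p²p*} + x_{p²}; (iii) p* is the unique closest boundary point to each generator: every p ≠ p* with d_{p¹p} + x_{p¹} = d_{p²p} + x_{p²} satisfies d_{p²p} > c − a and d_{p¹p} > c + a. -/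
lemma coord_abs_le_norm (v : Pt) : |v 0| ≤ ‖v‖ := by
  rw [EuclideanSpace.norm_eq]
  refine (Real.le_sqrt (abs_nonneg _) (Finset.sum_nonneg fun i _ => sq_nonneg _)).mpr ?_
  rw [sq_abs]
  have := Finset.single_le_sum (f := fun i => ‖v i‖ ^ 2)
    (fun i _ => sq_nonneg _) (Finset.mem_univ (0 : Fin 2))
  simpa [Real.norm_eq_abs, sq_abs] using this

/-- with `a = (x_{p²} - x_{p¹})/2`, `c = d_{p¹p²}/2`, the point
`p* = p¹ + ((c+a)/(2c))(p² - p¹)` satisfies `d_{p¹p*} = c + a`, `d_{p²p*} = c - a`, lies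
on the energy-based Voronoi boundary, and is the unique closest boundary point to each
generator. -/
theorem closest_boundary_point
    (p1 p2 : Pt) (hne : p1 ≠ p2) :
    let a : ℝ := (p2 0 - p1 0) / 2
    let c : ℝ := dist p1 p2 / 2
    let pstar : Pt := p1 + ((c + a) / (2 * c)) • (p2 - p1)
    dist p1 pstar = c + a ∧ dist p2 pstar = c - a ∧
      dist p1 pstar + p1 0 = dist p2 pstar + p2 0 ∧
      ∀ p : Pt, p ≠ pstar → dist p1 p + p1 0 = dist p2 p + p2 0 →
        c - a < dist p2 p ∧ c + a < dist p1 p := by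
  intro a c pstar
  have hd : dist p1 p2 = 2 * c := by simp [c]; ring
  have hc : 0 < c := by
    have := dist_pos.mpr hne
    simp only [c]; linarith
  have habs : |a| ≤ c := by
    have h := coord_abs_le_norm (p2 - p1)
    have : ‖p2 - p1‖ = dist p1 p2 := by rw [dist_comm, dist_eq_norm]
    rw [this, hd] at h
    have h0 : (p2 - p1) 0 = p2 0 - p1 0 := by
      simp [PiLp.sub_apply]
    rw [h0] at h
    simp only [a]
    rw [abs_div]
    rw [abs_of_pos (by norm_num : (0:ℝ) < 2)]
    linarith
  have hca : 0 ≤ c + a := by cases abs_le.mp habs; linarith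
  have hca' : 0 ≤ c - a := by cases abs_le.mp habs; linarith
  have hnorm : ‖p2 - p1‖ = 2 * c := by rw [← dist_eq_norm, dist_comm]; exact hd
  have h1 : dist p1 pstar = c + a := by
    have : pstar - p1 = ((c + a) / (2 * c)) • (p2 - p1) := by
      simp only [pstar]; abel
    rw [dist_comm, dist_eq_norm, this, norm_smul, hnorm, Real.norm_eq_abs,
      abs_of_nonneg (div_nonneg hca (by linarith))]
    field_simp
  have h2 : dist p2 pstar = c - a := by
    have : pstar - p2 = (((c + a) / (2 * c)) - 1) • (p2 - p1) := by
      simp only [pstar, sub_smul, one_smul]; abel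
    rw [dist_comm, dist_eq_norm, this, norm_smul, hnorm, Real.norm_eq_abs]
    have he : (c + a) / (2 * c) - 1 = (a - c) / (2 * c) := by field_simp; ring
    rw [he, abs_div, abs_of_pos (by linarith : (0:ℝ) < 2 * c),
      abs_of_nonpos (by linarith : a - c ≤ 0)]
    field_simp
    ring
  refine ⟨h1, h2, ?_, ?_⟩
  · rw [h1, h2]; simp only [a]; ring
  · intro p hp hbd
    have htri : dist p1 p2 ≤ dist p1 p + dist p2 p := by
      have := dist_triangle p1 p p2
      rw [dist_comm p p2] at this; linarith
    have h2a : dist p1 p - dist p2 p = 2 * a := by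
      have : p2 0 - p1 0 = 2 * a := by simp [a]; ring
      linarith
    rw [hd] at htri
    have key : dist p1 p + dist p2 p ≠ 2 * c := by
      intro heq
      have hd1 : dist p1 p = c + a := by linarith
      have heq' : dist p1 p + dist p p2 = dist p1 p2 := by
        rw [dist_comm p p2, hd, heq]
      have hw : Wbtw ℝ p1 p p2 := dist_add_dist_eq_iff.mp heq'
      have hseg : p ∈ segment ℝ p1 p2 := mem_segment_iff_wbtw.mpr hw
      rw [segment_eq_image'] at hseg
      obtain ⟨s, ⟨hs0, hs1⟩, hsp⟩ := hseg
      have : dist p1 p = s * (2 * c) := by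
        rw [dist_comm, dist_eq_norm, ← hsp]
        have : p1 + s • (p2 - p1) - p1 = s • (p2 - p1) := by abel
        rw [this, norm_smul, hnorm, Real.norm_eq_abs, abs_of_nonneg hs0]
      have hs : s = (c + a) / (2 * c) := by
        rw [hd1] at this
        field_simp
        linarith
      exact hp (by rw [← hsp, hs])
    have hlt : 2 * c < dist p1 p + dist p2 p := lt_of_le_of_ne htri (Ne.symm key)
    constructor <;> linarith
end

section
/- Let p¹, p² ∈ ℝ² satisfy x_{p¹} < x_{p²} and y_{p¹} < y_{p²}, and let a = (x_{p²} − x_{p¹})/2, b = (y_{p²} − y_{p¹})/2 with transformed coordinates x'_p, y'_p defined from p¹, p². Every p ∈ ℝ² with x'_p ≤ (a/b)|y'_p| satisfies d_{p¹p} + x_{p¹} ≤ d_{p²p} + x_{p²}; that is, the asymptote-based region D_lower(p¹|p²) is contained in the energy-based Voronoi cell of p¹ with respect to p². -/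
lemma radicand_eq (u v X Y d : ℝ) (hd : d ≠ 0) (hdsq : d ^ 2 = X ^ 2 + Y ^ 2) :
    (u + X/2) ^ 2 + (v + Y/2) ^ 2
      = ((u * (X/d) + v * (Y/d)) + d/2) ^ 2 + (-u * (Y/d) + v * (X/d)) ^ 2 := by
  field_simp
  linear_combination (4*(u^2+v^2) - d^2) * hdsq

lemma radicand_eq' (u v X Y d : ℝ) (hd : d ≠ 0) (hdsq : d ^ 2 = X ^ 2 + Y ^ 2) :
    (u - X/2) ^ 2 + (v - Y/2) ^ 2
      = ((u * (X/d) + v * (Y/d)) - d/2) ^ 2 + (-u * (Y/d) + v * (X/d)) ^ 2 := by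
  field_simp
  linear_combination (4*(u^2+v^2) - d^2) * hdsq

set_option maxHeartbeats 1000000 in
/-- every point `p` with `x'_p ≤ (a/b)|y'_p|` (the asymptote-based lower
approximation `D_lower(p¹|p²)`) lies in the energy-based Voronoi cell of `p¹` with
respect to `p²`. -/
theorem asymptote_lower_approximation
    (p1 p2 p : Pt) (hx : p1 0 < p2 0) (hy : p1 1 < p2 1) :
    let a : ℝ := (p2 0 - p1 0) / 2
    let b : ℝ := (p2 1 - p1 1) / 2
    let cosα : ℝ := (p2 0 - p1 0) / dist p1 p2
    let sinα : ℝ := (p2 1 - p1 1) / dist p1 p2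
    let x' : ℝ := (p 0 - (p1 0 + p2 0) / 2) * cosα + (p 1 - (p1 1 + p2 1) / 2) * sinα
    let y' : ℝ := -(p 0 - (p1 0 + p2 0) / 2) * sinα + (p 1 - (p1 1 + p2 1) / 2) * cosα
    x' ≤ (a / b) * |y'| → dist p1 p + p1 0 ≤ dist p2 p + p2 0 := by
  intro a b cosα sinα x' y' hcond
  have hae : a = (p2 0 - p1 0) / 2 := rfl
  have hbe : b = (p2 1 - p1 1) / 2 := rfl
  have hce : cosα = (p2 0 - p1 0) / dist p1 p2 := rfl
  have hse : sinα = (p2 1 - p1 1) / dist p1 p2 := rfl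
  have hxe : x' = (p 0 - (p1 0 + p2 0) / 2) * cosα + (p 1 - (p1 1 + p2 1) / 2) * sinα := rfl
  have hye : y' = -(p 0 - (p1 0 + p2 0) / 2) * sinα + (p 1 - (p1 1 + p2 1) / 2) * cosα := rfl
  clear_value a b cosα sinα x' y'
  have hne : p1 ≠ p2 := by
    intro h; rw [h] at hx; exact lt_irrefl _ hx
  obtain ⟨d, hd⟩ : ∃ d : ℝ, d = dist p1 p2 := ⟨_, rfl⟩
  rw [← hd] at hce hse
  have hd0 : (0:ℝ) < d := hd ▸ dist_pos.mpr hne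
  have hdne : d ≠ 0 := ne_of_gt hd0
  have hdsq : d ^ 2 = (p2 0 - p1 0) ^ 2 + (p2 1 - p1 1) ^ 2 := by
    rw [hd, EuclideanSpace.dist_eq, Fin.sum_univ_two,
      Real.sq_sqrt (by positivity), Real.dist_eq, Real.dist_eq, sq_abs, sq_abs]
    ring
  have ha : (0:ℝ) < a := by rw [hae]; linarith
  have hb : (0:ℝ) < b := by rw [hbe]; linarith
  have hcsq : (d/2) ^ 2 = a ^ 2 + b ^ 2 := by
    rw [hae, hbe]; field_simp; linarith [hdsq]
  have h1 : dist p1 p = Real.sqrt ((x' + d/2) ^ 2 + y' ^ 2) := by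
    rw [EuclideanSpace.dist_eq, Fin.sum_univ_two]
    congr 1
    rw [Real.dist_eq, Real.dist_eq, sq_abs, sq_abs, hxe, hye, hce, hse]
    linear_combination radicand_eq (p 0 - (p1 0 + p2 0) / 2) (p 1 - (p1 1 + p2 1) / 2)
      (p2 0 - p1 0) (p2 1 - p1 1) d hdne hdsq
  have h2 : dist p2 p = Real.sqrt ((x' - d/2) ^ 2 + y' ^ 2) := by
    rw [EuclideanSpace.dist_eq, Fin.sum_univ_two]
    congr 1
    rw [Real.dist_eq, Real.dist_eq, sq_abs, sq_abs, hxe, hye, hce, hse]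
    linear_combination radicand_eq' (p 0 - (p1 0 + p2 0) / 2) (p 1 - (p1 1 + p2 1) / 2)
      (p2 0 - p1 0) (p2 1 - p1 1) d hdne hdsq
  obtain ⟨s, hs⟩ : ∃ s : ℝ, s = Real.sqrt ((x' - d/2) ^ 2 + y' ^ 2) := ⟨_, rfl⟩
  have hs0 : 0 ≤ s := hs ▸ Real.sqrt_nonneg _
  have hs2 : s ^ 2 = (x' - d/2) ^ 2 + y' ^ 2 := by
    rw [hs]; exact Real.sq_sqrt (by positivity)
  have hY2 : |y'| ^ 2 = y' ^ 2 := sq_abs _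
  have hxb : x' * b ≤ a * |y'| := by
    rw [div_mul_eq_mul_div, le_div_iff₀ hb] at hcond
    linarith
  have key : x' * (d/2) - a ^ 2 ≤ a * s := by
    clear hxe hye hce hse hcond hd hae hbe hne h1 h2 hs hdsq hx hy
    rcases le_or_gt (x' * (d/2)) (a ^ 2) with h | h
    · nlinarith [mul_nonneg ha.le hs0]
    · have hX0 : 0 < x' := by nlinarith [sq_nonneg a]
      have hXY : x' ^ 2 * b ^ 2 ≤ a ^ 2 * y' ^ 2 := by
        nlinarith [mul_nonneg hX0.le hb.le, abs_nonneg y']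
      nlinarith [mul_nonneg ha.le hs0, sq_nonneg (a * s - (x' * (d/2) - a^2)),
        sq_nonneg (a * s + (x' * (d/2) - a^2))]
  have hp2 : p2 0 = p1 0 + 2 * a := by rw [hae]; ring
  have hfin : Real.sqrt ((x' + d/2) ^ 2 + y' ^ 2) ≤ 2 * a + s := by
    have harg : (x' + d/2) ^ 2 + y' ^ 2 ≤ (2 * a + s) ^ 2 := by nlinarith
    have h := Real.sqrt_le_sqrt harg
    rwa [Real.sqrt_sq (by positivity)] at h
  rw [h1, h2, ← hs, hp2]
  linarith
end

section
/- Let p¹, p² ∈ ℝ² satisfy x_{p¹} < x_{p²} and y_{p¹} < y_{p²}, and let a = (x_{p²} − x_{p¹})/2, b = (y_{p²} − y_{p¹})/2 with transformed coordinates x'_p, y'_p defined from p¹, p². Every p ∈ ℝ² with d_{p¹p} + x_{p¹} ≤ d_{p²p} + x_{p²} satisfies x'_p ≤ (a/b)|y'_p| + a; that is, the energy-based Voronoi cell of p¹ with respect to p² is contained in the asymptote-based region D_upper(p¹|p²) bounded by the lines through the vertex parallel to the asymptotes. -/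
set_option maxHeartbeats 1000000 in
/-- every point `p` in the energy-based Voronoi cell of `p¹` with respect
to `p²` satisfies `x'_p ≤ (a/b)|y'_p| + a`, i.e. the cell is contained in the
asymptote-based upper approximation `D_upper(p¹|p²)`. -/
theorem asymptote_upper_approximation
    (p1 p2 p : Pt) (hx : p1 0 < p2 0) (hy : p1 1 < p2 1) :
    let a : ℝ := (p2 0 - p1 0) / 2
    let b : ℝ := (p2 1 - p1 1) / 2
    let cosα : ℝ := (p2 0 - p1 0) / dist p1 p2
    let sinα : ℝ := (p2 1 - p1 1) / dist p1 p2
    let x' : ℝ := (p 0 - (p1 0 + p2 0) / 2) * cosα + (p 1 - (p1 1 + p2 1) / 2) * sinα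
    let y' : ℝ := -(p 0 - (p1 0 + p2 0) / 2) * sinα + (p 1 - (p1 1 + p2 1) / 2) * cosα
    dist p1 p + p1 0 ≤ dist p2 p + p2 0 → x' ≤ (a / b) * |y'| + a := by
  intro a b cosα sinα x' y' hvor
  have ha : a = (p2 0 - p1 0) / 2 := rfl
  have hb : b = (p2 1 - p1 1) / 2 := rfl
  have hcosd : cosα = (p2 0 - p1 0) / dist p1 p2 := rfl
  have hsind : sinα = (p2 1 - p1 1) / dist p1 p2 := rfl
  have hX : x' = (p 0 - (p1 0 + p2 0) / 2) * cosα + (p 1 - (p1 1 + p2 1) / 2) * sinα := rfl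
  have hY : y' = -(p 0 - (p1 0 + p2 0) / 2) * sinα + (p 1 - (p1 1 + p2 1) / 2) * cosα := rfl
  clear_value a b cosα sinα x' y'
  by_contra hcon
  push_neg at hcon
  have ha0 : 0 < a := by rw [ha]; linarith
  have hb0 : 0 < b := by rw [hb]; linarith
  have hne : p1 ≠ p2 := by
    intro h; rw [h] at hx; exact lt_irrefl _ hx
  have hc0 : 0 < dist p1 p2 := dist_pos.mpr hne
  set c := dist p1 p2 with hcdef
  have hcsq : c ^ 2 = (p2 0 - p1 0) ^ 2 + (p2 1 - p1 1) ^ 2 := by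
    rw [hcdef, EuclideanSpace.dist_eq, Fin.sum_univ_two,
      Real.sq_sqrt (by positivity)]
    simp only [Real.dist_eq, sq_abs]
    ring
  have hcos : c * cosα = p2 0 - p1 0 := by
    rw [hcosd]; field_simp
  have hsin : c * sinα = p2 1 - p1 1 := by
    rw [hsind]; field_simp
  have hpyth : cosα ^ 2 + sinα ^ 2 = 1 := by
    rw [hcosd, hsind]
    field_simp
    linarith [hcsq]
  have hd1 : (dist p1 p) ^ 2 = (p 0 - p1 0) ^ 2 + (p 1 - p1 1) ^ 2 := by
    rw [EuclideanSpace.dist_eq, Fin.sum_univ_two, Real.sq_sqrt (by positivity)]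
    simp only [Real.dist_eq, sq_abs]
    ring
  have hd2 : (dist p2 p) ^ 2 = (p 0 - p2 0) ^ 2 + (p 1 - p2 1) ^ 2 := by
    rw [EuclideanSpace.dist_eq, Fin.sum_univ_two, Real.sq_sqrt (by positivity)]
    simp only [Real.dist_eq, sq_abs]
    ring
  set u : ℝ := p 0 - (p1 0 + p2 0) / 2 with hu
  set v : ℝ := p 1 - (p1 1 + p2 1) / 2 with hv
  have key1 : (dist p1 p) ^ 2 = (x' + c / 2) ^ 2 + y' ^ 2 := by
    rw [hd1]
    linear_combination (-(x' + u * cosα + v * sinα + c)) * hX -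
      (y' + (-u * sinα + v * cosα)) * hY - (u ^ 2 + v ^ 2) * hpyth -
      u * hcos - v * hsin - (1/4) * hcsq
  have key2 : (dist p2 p) ^ 2 = (x' - c / 2) ^ 2 + y' ^ 2 := by
    rw [hd2]
    linear_combination (-(x' + u * cosα + v * sinα) + c) * hX -
      (y' + (-u * sinα + v * cosα)) * hY - (u ^ 2 + v ^ 2) * hpyth +
      u * hcos + v * hsin - (1/4) * hcsq
  have hc4 : c ^ 2 = 4 * a ^ 2 + 4 * b ^ 2 := by rw [ha, hb, hcsq]; ring
  have hc2a : 2 * a < c := by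
    refine lt_of_pow_lt_pow_left₀ 2 hc0.le ?_
    have hb2 : 0 < b ^ 2 := pow_pos hb0 2
    have h4a : (2 * a) ^ 2 = 4 * a ^ 2 := by ring
    linarith [hc4, hb2, h4a]
  -- from hcon, bound |y'|
  have h0 : (a / b) * |y'| < x' - a := by linarith
  have h1 : a * |y'| < b * (x' - a) := by
    have h2 := mul_lt_mul_of_pos_left h0 hb0
    calc a * |y'| = b * ((a / b) * |y'|) := by field_simp
      _ < b * (x' - a) := h2
  have hx'a : a < x' := by
    have h9 : 0 < b * (x' - a) := lt_of_le_of_lt (mul_nonneg ha0.le (abs_nonneg y')) h1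
    have h10 : 0 < (b * (x' - a)) / b := div_pos h9 hb0
    rw [mul_div_cancel_left₀ _ hb0.ne'] at h10
    linarith
  have hy2 : a ^ 2 * y' ^ 2 < b ^ 2 * (x' - a) ^ 2 := by
    have h3 := mul_self_lt_mul_self (mul_nonneg ha0.le (abs_nonneg y')) h1
    calc a ^ 2 * y' ^ 2 = (a * |y'|) * (a * |y'|) := by rw [← sq_abs y']; ring
      _ < (b * (x' - a)) * (b * (x' - a)) := h3
      _ = b ^ 2 * (x' - a) ^ 2 := by ring
  have hid : (c * x' - 2 * a ^ 2) ^ 2 - 4 * a ^ 2 * ((x' - c / 2) ^ 2 + y' ^ 2)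
      = 4 * b ^ 2 * (x' ^ 2 - a ^ 2) - 4 * a ^ 2 * y' ^ 2 := by
    linear_combination (x' ^ 2 - a ^ 2) * hc4
  have hpos : 0 < 4 * b ^ 2 * (x' ^ 2 - a ^ 2) - 4 * a ^ 2 * y' ^ 2 := by
    have h5 : 4 * b ^ 2 * (x' ^ 2 - a ^ 2) - 4 * b ^ 2 * (x' - a) ^ 2
        = 8 * a * b ^ 2 * (x' - a) := by ring
    have h6 : 0 < 8 * a * b ^ 2 * (x' - a) := by
      have := sub_pos.mpr hx'a
      positivity
    linarith [hy2, h5, h6]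
  have hcx2a : 0 < c * x' - 2 * a ^ 2 := by
    have t1 := mul_pos (sub_pos.mpr hc2a) (lt_trans ha0 hx'a)
    have t2 := mul_pos ha0 (sub_pos.mpr hx'a)
    have e1 : (c - 2 * a) * x' = c * x' - 2 * a * x' := by ring
    have e2 : a * (x' - a) = a * x' - a ^ 2 := by ring
    linarith [t1, t2, e1, e2]
  have hd2sq : 4 * a ^ 2 * (dist p2 p) ^ 2 < (c * x' - 2 * a ^ 2) ^ 2 := by
    have h7 : 4 * a ^ 2 * (dist p2 p) ^ 2 = 4 * a ^ 2 * ((x' - c / 2) ^ 2 + y' ^ 2) := by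
      rw [key2]
    linarith [h7, hid, hpos]
  have h2ad2 : 2 * a * dist p2 p < c * x' - 2 * a ^ 2 := by
    refine lt_of_pow_lt_pow_left₀ 2 hcx2a.le ?_
    calc (2 * a * dist p2 p) ^ 2 = 4 * a ^ 2 * (dist p2 p) ^ 2 := by ring
      _ < (c * x' - 2 * a ^ 2) ^ 2 := hd2sq
  have hfin : (dist p2 p + 2 * a) ^ 2 < (dist p1 p) ^ 2 := by
    have e1 : (dist p2 p + 2 * a) ^ 2
        = (dist p2 p) ^ 2 + 2 * (2 * a * dist p2 p) + 4 * a ^ 2 := by ring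
    have hcx : c * x' = ((x' + c / 2) ^ 2 - (x' - c / 2) ^ 2) / 2 := by ring
    linarith [key1, key2, h2ad2, e1]
  have hlt : dist p2 p + 2 * a < dist p1 p := by
    refine lt_of_pow_lt_pow_left₀ 2 dist_nonneg ?_
    exact hfin
  have hp2 : p2 0 = p1 0 + 2 * a := by rw [ha]; ring
  rw [hp2] at hvor
  linarith
end

section
/- Let p¹, p² ∈ ℝ² satisfy x_{p¹} < x_{p²} and y_{p¹} < y_{p²}, with a = (x_{p²} − x_{p¹})/2, b = (y_{p²} − y_{p¹})/2, α = arctan((y_{p²} − y_{p¹})/(x_{p²} − x_{p¹})), x̄ = (x_{p¹}+x_{p²})/2, ȳ = (y_{p¹}+y_{p²})/2, and transformed coordinates x'_p, y'_p defined from p¹, p². Then for every p ∈ ℝ²: (i) (y'_p = (b/a)x'_p and y'_p ≥ 0) holds if and only if ((y_p − ȳ)cos 2α = (x_p − x̄)sin 2α and y_p ≥ ȳ); (ii) (y'_p = −(b/a)x'_p and y'_p ≤ 0) holds if and only if (y_p = ȳ and x_p ≥ x̄). Thus the two asymptotes of the hyperbolic Voronoi boundary between p¹ and p² pass through the midpoint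 of p¹p²: one is the horizontal half line in the positive x direction, and the other has slope tan 2α. -/
/-- in the original coordinates, the two asymptotes of the hyperbolic
Voronoi boundary between `p¹` and `p²` pass through the midpoint of `p¹p²`: the
asymptote `y' = (b/a)x'`, `y' ≥ 0` is the half line of slope `tan 2α` through the
midpoint with `y ≥ ȳ`, and the asymptote `y' = -(b/a)x'`, `y' ≤ 0` is the horizontal
half line through the midpoint in the positive `x` direction. -/
theorem asymptote_equations
    (p1 p2 : Pt) (hx : p1 0 < p2 0) (hy : p1 1 < p2 1) :
    let a : ℝ := (p2 0 - p1 0) / 2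
    let b : ℝ := (p2 1 - p1 1) / 2
    let α : ℝ := Real.arctan ((p2 1 - p1 1) / (p2 0 - p1 0))
    let xbar : ℝ := (p1 0 + p2 0) / 2
    let ybar : ℝ := (p1 1 + p2 1) / 2
    let cosα : ℝ := (p2 0 - p1 0) / dist p1 p2
    let sinα : ℝ := (p2 1 - p1 1) / dist p1 p2
    ∀ p : Pt,
      let x' : ℝ := (p 0 - xbar) * cosα + (p 1 - ybar) * sinα
      let y' : ℝ := -(p 0 - xbar) * sinα + (p 1 - ybar) * cosα
      ((y' = (b / a) * x' ∧ 0 ≤ y') ↔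
        ((p 1 - ybar) * Real.cos (2 * α) = (p 0 - xbar) * Real.sin (2 * α) ∧
          ybar ≤ p 1)) ∧
      ((y' = -(b / a) * x' ∧ y' ≤ 0) ↔ (p 1 = ybar ∧ xbar ≤ p 0)) := by
  intro a b α xbar ybar cosα sinα p x' y'
  have hdx : (0:ℝ) < p2 0 - p1 0 := by linarith
  have hdy : (0:ℝ) < p2 1 - p1 1 := by linarith
  set dx : ℝ := p2 0 - p1 0 with hdxe
  set dy : ℝ := p2 1 - p1 1 with hdye
  have hd : dist p1 p2 = Real.sqrt (dx ^ 2 + dy ^ 2) := by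
    rw [EuclideanSpace.dist_eq, Fin.sum_univ_two]
    congr 1
    rw [Real.dist_eq, Real.dist_eq, sq_abs, sq_abs, hdxe, hdye]; ring
  have hd0 : 0 < dist p1 p2 := by rw [hd]; positivity
  have hd2 : dist p1 p2 ^ 2 = dx ^ 2 + dy ^ 2 := by
    rw [hd, Real.sq_sqrt (by positivity)]
  set d : ℝ := dist p1 p2 with hde
  have hsum : (0:ℝ) < dx ^ 2 + dy ^ 2 := by positivity
  have hs1 : (0:ℝ) < 1 + (dy / dx) ^ 2 := by positivity
  have hssq : Real.sqrt (1 + (dy / dx) ^ 2) ^ 2 = 1 + (dy / dx) ^ 2 :=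
    Real.sq_sqrt hs1.le
  have hc2 : Real.cos (2 * α) = (dx ^ 2 - dy ^ 2) / (dx ^ 2 + dy ^ 2) := by
    rw [Real.cos_two_mul]
    show 2 * Real.cos (Real.arctan (dy / dx)) ^ 2 - 1 = _
    rw [Real.cos_arctan, div_pow, one_pow, hssq]
    field_simp
    ring
  have hs2 : Real.sin (2 * α) = 2 * dx * dy / (dx ^ 2 + dy ^ 2) := by
    rw [Real.sin_two_mul]
    show 2 * Real.sin (Real.arctan (dy / dx)) * Real.cos (Real.arctan (dy / dx)) = _
    rw [Real.sin_arctan, Real.cos_arctan]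
    have key : 2 * (dy / dx / Real.sqrt (1 + (dy / dx) ^ 2)) *
        (1 / Real.sqrt (1 + (dy / dx) ^ 2)) =
        2 * (dy / dx) / Real.sqrt (1 + (dy / dx) ^ 2) ^ 2 := by
      rw [pow_two]; field_simp
    rw [key, hssq]
    field_simp
  set X : ℝ := p 0 - xbar with hXe
  set Y : ℝ := p 1 - ybar with hYe
  have hx' : x' = (X * dx + Y * dy) / d := by
    show (p 0 - xbar) * cosα + (p 1 - ybar) * sinα = _
    rw [← hXe, ← hYe]
    show X * (dx / d) + Y * (dy / d) = _
    field_simp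
  have hy' : y' = (Y * dx - X * dy) / d := by
    show -(p 0 - xbar) * sinα + (p 1 - ybar) * cosα = _
    rw [← hXe, ← hYe]
    show -X * (dy / d) + Y * (dx / d) = _
    field_simp
    ring
  have hba : b / a = dy / dx := by
    show dy / 2 / (dx / 2) = dy / dx
    rw [div_div_div_cancel_right₀]
    exact two_ne_zero
  have hYiff : ybar ≤ p 1 ↔ 0 ≤ Y := by rw [hYe]; constructor <;> intro <;> linarith
  have hY0iff : p 1 = ybar ↔ Y = 0 := by rw [hYe]; constructor <;> intro <;> linarith
  have hXiff : xbar ≤ p 0 ↔ 0 ≤ X := by rw [hXe]; constructor <;> intro <;> linarith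
  rw [hba, hc2, hs2, hx', hy', hYiff, hY0iff, hXiff]
  clear_value X Y d dx dy
  clear hc2 hs2 hx' hy' hba hYiff hY0iff hXiff hXe hYe hdxe hdye hd hde hssq hs1
  clear x' y' sinα cosα ybar xbar α b a hx hy p
  constructor
  · constructor
    · rintro ⟨h1, h2⟩
      rw [div_mul_div_comm, div_eq_div_iff hd0.ne' (mul_ne_zero hdx.ne' hd0.ne')] at h1
      have e2 : ((Y * dx - X * dy) * dx) * d = (dy * (X * dx + Y * dy)) * d := by
        linear_combination h1
      have key : Y * (dx ^ 2 - dy ^ 2) = X * (2 * dx * dy) := by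
        linear_combination mul_right_cancel₀ hd0.ne' e2
      have h3 : 0 ≤ Y * dx - X * dy := by
        have := mul_nonneg h2 hd0.le
        rwa [div_mul_cancel₀ _ hd0.ne'] at this
      have hYnn : 0 ≤ Y := by nlinarith [mul_nonneg h3 hdx.le, key, hsum]
      refine ⟨?_, hYnn⟩
      rw [← mul_div_assoc, ← mul_div_assoc, div_eq_div_iff hsum.ne' hsum.ne']
      linear_combination (dx ^ 2 + dy ^ 2) * key
    · rintro ⟨h1, h2⟩
      rw [← mul_div_assoc, ← mul_div_assoc, div_eq_div_iff hsum.ne' hsum.ne'] at h1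
      have key : Y * (dx ^ 2 - dy ^ 2) = X * (2 * dx * dy) := by
        have e2 : (Y * (dx ^ 2 - dy ^ 2)) * (dx ^ 2 + dy ^ 2) =
            (X * (2 * dx * dy)) * (dx ^ 2 + dy ^ 2) := by linear_combination h1
        exact mul_right_cancel₀ hsum.ne' e2
      have h3 : 0 ≤ Y * dx - X * dy := by
        nlinarith [mul_nonneg h2 hsum.le, key, hdx]
      refine ⟨?_, div_nonneg h3 hd0.le⟩
      rw [div_mul_div_comm, div_eq_div_iff hd0.ne' (mul_ne_zero hdx.ne' hd0.ne')]
      linear_combination d * key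
  · constructor
    · rintro ⟨h1, h2⟩
      rw [show -(dy / dx) = (-dy) / dx from (neg_div _ _).symm, div_mul_div_comm,
        div_eq_div_iff hd0.ne' (mul_ne_zero hdx.ne' hd0.ne')] at h1
      have e2 : ((Y * dx - X * dy) * dx) * d = (-dy * (X * dx + Y * dy)) * d := by
        linear_combination h1
      have h5 : Y * (dx ^ 2 + dy ^ 2) = 0 := by
        linear_combination mul_right_cancel₀ hd0.ne' e2
      have hYz : Y = 0 := by
        rcases mul_eq_zero.mp h5 with h | h
        · exact h
        · exact absurd h hsum.ne'
      refine ⟨hYz, ?_⟩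
      rw [hYz] at h2
      have h4 : 0 * dx - X * dy ≤ 0 := by
        by_contra hcon
        push_neg at hcon
        have := div_pos hcon hd0
        exact absurd h2 (not_le.mpr this)
      nlinarith [h4, hdy]
    · rintro ⟨h1, h2⟩
      rw [h1]
      constructor
      · rw [show -(dy / dx) = (-dy) / dx from (neg_div _ _).symm, div_mul_div_comm,
          div_eq_div_iff hd0.ne' (mul_ne_zero hdx.ne' hd0.ne')]
        ring
      · apply div_nonpos_of_nonpos_of_nonneg _ hd0.le
        nlinarith [mul_nonneg h2 hdy.le]
end

section
/- Let p¹, p ∈ ℝ² satisfy y_p = y_{p¹} and x_p < x_{p¹}. Then {q ∈ ℝ² : d_{p¹q} + x_{p¹} ≤ d_{pq} + x_p} = {q ∈ ℝ² : y_q = y_{p¹} and x_q ≥ x_{p¹}}; in particular, this degenerate Voronoi cell V(p¹|p) does not depend on the exact location of p (only on y_p = y_{p¹} and x_p < x_{p¹}). -/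
lemma sqrt_key (a b c : ℝ) (hc : 0 < c) :
    Real.sqrt (a^2 + b^2) + c ≤ Real.sqrt ((a + c)^2 + b^2) ↔ b = 0 ∧ 0 ≤ a := by
  constructor
  · intro h
    have hs : 0 ≤ Real.sqrt (a^2 + b^2) := Real.sqrt_nonneg _
    have h1 : (Real.sqrt (a^2 + b^2) + c)^2 ≤ ((a + c)^2 + b^2) := by
      have := Real.sq_sqrt (by positivity : (0:ℝ) ≤ (a + c)^2 + b^2)
      calc (Real.sqrt (a^2 + b^2) + c)^2 ≤ (Real.sqrt ((a + c)^2 + b^2))^2 := by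
            apply pow_le_pow_left₀ (by positivity) h
        _ = (a + c)^2 + b^2 := this
    have hsq : Real.sqrt (a^2 + b^2) ^ 2 = a^2 + b^2 :=
      Real.sq_sqrt (by positivity)
    have h2 : Real.sqrt (a^2 + b^2) ≤ a := by
      nlinarith [h1, hsq]
    have ha : 0 ≤ a := le_trans hs h2
    have h3 : a^2 + b^2 ≤ a^2 := by
      calc a^2 + b^2 = Real.sqrt (a^2 + b^2) ^ 2 := hsq.symm
        _ ≤ a^2 := by nlinarith [h2, hs]
    have hb : b = 0 := by nlinarith
    exact ⟨hb, ha⟩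
  · rintro ⟨hb, ha⟩
    subst hb
    rw [show a^2 + 0^2 = a^2 by ring, show (a+c)^2 + 0^2 = (a+c)^2 by ring,
      Real.sqrt_sq ha, Real.sqrt_sq (by linarith)]

/-- if `y_p = y_{p¹}` and `x_p < x_{p¹}`, the degenerate Voronoi cell
`V(p¹|p)` is the half line starting at `p¹` in the positive `x` direction; in
particular, it does not depend on the exact location of `p`. -/
theorem degenerate_voronoi_cell
    (p1 p : Pt) (hy : p 1 = p1 1) (hx : p 0 < p1 0) :
    {q : Pt | dist p1 q + p1 0 ≤ dist p q + p 0} =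
      {q : Pt | q 1 = p1 1 ∧ p1 0 ≤ q 0} := by
  ext q
  simp only [Set.mem_setOf_eq]
  rw [EuclideanSpace.dist_eq, EuclideanSpace.dist_eq, Fin.sum_univ_two,
    Fin.sum_univ_two]
  simp only [Real.dist_eq, sq_abs]
  set a := q 0 - p1 0 with ha
  set b := q 1 - p1 1 with hb
  set c := p1 0 - p 0 with hc
  have hc0 : 0 < c := by simp [hc]; linarith
  have e1 : (p1 0 - q 0)^2 + (p1 1 - q 1)^2 = a^2 + b^2 := by ring
  have e2 : (p 0 - q 0)^2 + (p 1 - q 1)^2 = (a + c)^2 + b^2 := by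
    rw [hy]; ring
  rw [e1, e2]
  have key := sqrt_key a b c hc0
  constructor
  · intro h
    have : Real.sqrt (a^2 + b^2) + c ≤ Real.sqrt ((a + c)^2 + b^2) := by linarith
    obtain ⟨hb0, ha0⟩ := key.mp this
    constructor
    · have : q 1 - p1 1 = 0 := hb0
      linarith
    · have : 0 ≤ q 0 - p1 0 := ha0
      linarith
  · rintro ⟨h1, h2⟩
    have := key.mpr ⟨by simp [hb, h1], by simp [ha]; linarith⟩
    linarith
end
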